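/- Let d ≥ 1, α > 2, and let H ⊆ I(ℝ^d) be nonempty and completely closed in the strong sense. Then 𝔔_α(H) is exactly the class of all Dirac measures δ_γ, γ ∈ ℝ^d. -/

import Mathlib

open MeasureTheory Filter Complex
open scoped InnerProductSpace BoundedContinuousFunction BigOperators Topology

noncomputable section

/-- Euclidean space ℝ^d. -/
abbrev Ed (d : ℕ) := EuclideanSpace ℝ (Fin d)

/-- The characteristic function of a measure on ℝ^d. -/
def charFn {d : ℕ} (μ : Measure (Ed d)) (z : Ed d) : ℂ :=
  ∫ x, Complex.exp ((⟪z, x⟫_ℝ : ℂ) * Complex.I) ∂μ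

/-- n-fold convolution power of a measure. -/
def convPow {d : ℕ} (μ : Measure (Ed d)) : ℕ → Measure (Ed d)
  | 0 => Measure.dirac 0
  | n + 1 => (convPow μ n).conv μ

/-- The class I(ℝ^d) of infinitely divisible probability measures on ℝ^d. -/
def IDiv (d : ℕ) : Set (Measure (Ed d)) :=
  {μ | IsProbabilityMeasure μ ∧
    ∀ n : ℕ, 1 ≤ n → ∃ ν : Measure (Ed d), IsProbabilityMeasure ν ∧ convPow ν n = μ}

open scoped Classical in
/-- The cumulant function C_μ of an infinitely divisible measure μ:
the unique continuous function with C 0 = 0 and μ̂ = exp ∘ C. -/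
def cumulant {d : ℕ} (μ : Measure (Ed d)) : Ed d → ℂ :=
  if h : ∃ C : Ed d → ℂ, Continuous C ∧ C 0 = 0 ∧ ∀ z, charFn μ z = Complex.exp (C z)
  then h.choose else 0

/-- Weak convergence of a sequence of measures to a measure. -/
def WeakTendsto {d : ℕ} (μs : ℕ → Measure (Ed d)) (ν : Measure (Ed d)) : Prop :=
  ∀ f : Ed d →ᵇ ℝ, Tendsto (fun n => ∫ x, f x ∂(μs n)) atTop (𝓝 (∫ x, f x ∂ν))

/-- H is completely closed in the strong sense: closed under convolution, weak convergence
of sequences, type equivalence, and t-th convolution powers for t > 0. -/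
def IsCCSS {d : ℕ} (H : Set (Measure (Ed d))) : Prop :=
  (∀ μ ∈ H, ∀ ν ∈ H, μ.conv ν ∈ H) ∧
  (∀ (μs : ℕ → Measure (Ed d)) (ν : Measure (Ed d)),
      (∀ n, μs n ∈ H) → IsProbabilityMeasure ν → WeakTendsto μs ν → ν ∈ H) ∧
  (∀ μ ∈ H, ∀ a : ℝ, 0 < a → ∀ c : Ed d, μ.map (fun x => a • x + c) ∈ H) ∧
  (∀ μ ∈ H, ∀ t : ℝ, 0 < t → ∀ ν : Measure (Ed d), IsProbabilityMeasure ν →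
      (∀ z, charFn ν z = Complex.exp ((t : ℂ) * cumulant μ z)) → ν ∈ H)

/-- The class 𝔔_α(H). -/
def QOp {d : ℕ} (α : ℝ) (H : Set (Measure (Ed d))) : Set (Measure (Ed d)) :=
  {μ | IsProbabilityMeasure μ ∧
    ∃ (μs : ℕ → Measure (Ed d)) (j0 : ℕ) (a p : ℕ → ℝ) (c : ℕ → Ed d),
      (∀ j, μs j ∈ IDiv d) ∧ (∀ j, j0 ≤ j → μs j ∈ H) ∧
      (∀ n, 0 < a n) ∧ Monotone a ∧ Tendsto a atTop atTop ∧
      Tendsto (fun n => a (n + 1) / a n) atTop (𝓝 1) ∧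
      (∀ n, 0 < p n) ∧ Tendsto (fun n => p n / (a n) ^ α) atTop (𝓝 1) ∧
      ∀ z : Ed d, Tendsto (fun n =>
          (∏ j ∈ Finset.range n,
            Complex.exp ((p n : ℂ) * cumulant (μs j) ((a n)⁻¹ • z)))
            * Complex.exp ((⟪c n, z⟫_ℝ : ℂ) * Complex.I))
        atTop (𝓝 (charFn μ z))}

/-- 𝔔_α^∞(H) = ∩_{m ≥ 1} 𝔔_α^m(H). -/
def QInf {d : ℕ} (α : ℝ) (H : Set (Measure (Ed d))) : Set (Measure (Ed d)) :=
  ⋂ m : ℕ, (QOp α)^[m + 1] H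

/-- The class L^⟨α⟩(ℝ^d) of α-selfdecomposable distributions. -/
def SelfDec (d : ℕ) (α : ℝ) : Set (Measure (Ed d)) :=
  {μ | μ ∈ IDiv d ∧ ∀ b : ℝ, 1 < b → ∃ ρ ∈ IDiv d, ∀ z,
      charFn μ z = Complex.exp (((b ^ α : ℝ) : ℂ) * cumulant μ (b⁻¹ • z)) * charFn ρ z}

/-- The class S_β(ℝ^d) of β-stable distributions. -/
def Stable (d : ℕ) (β : ℝ) : Set (Measure (Ed d)) :=
  {μ | μ ∈ IDiv d ∧ ∀ b : ℝ, 1 < b → ∃ c : Ed d, ∀ z,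
      charFn μ z = Complex.exp (((b ^ β : ℝ) : ℂ) * cumulant μ (b⁻¹ • z)
        + (⟪c, z⟫_ℝ : ℂ) * Complex.I)}

/-- The class S(ℝ^d) of all stable distributions. -/
def StableAll (d : ℕ) : Set (Measure (Ed d)) :=
  ⋃ β ∈ Set.Ioc (0 : ℝ) 2, Stable d β

/-- Gaussian (possibly degenerate multivariate normal) distributions on ℝ^d. -/
def IsGaussianM {d : ℕ} (μ : Measure (Ed d)) : Prop :=
  IsProbabilityMeasure μ ∧
    ∃ A : Matrix (Fin d) (Fin d) ℝ, A.PosSemidef ∧ ∃ γ : Ed d, ∀ z,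
      charFn μ z = Complex.exp (-((∑ i, ∑ j, A i j * z i * z j : ℝ) : ℂ) / 2
        + (⟪γ, z⟫_ℝ : ℂ) * Complex.I)

/-- A class being closed under convolution and weak convergence. -/
def ConvWeakClosed {d : ℕ} (C : Set (Measure (Ed d))) : Prop :=
  (∀ μ ∈ C, ∀ ν ∈ C, μ.conv ν ∈ C) ∧
  (∀ (μs : ℕ → Measure (Ed d)) (ν : Measure (Ed d)),
      (∀ n, μs n ∈ C) → IsProbabilityMeasure ν → WeakTendsto μs ν → ν ∈ C)

/-- The closure K̄ of a class K under convolution and weak convergence: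
the smallest class containing K closed under both. -/
def cwClosure {d : ℕ} (K : Set (Measure (Ed d))) : Set (Measure (Ed d)) :=
  ⋂₀ {C | K ⊆ C ∧ ConvWeakClosed C}

/-- The nested classes L_m^⟨α⟩(ℝ^d) = 𝔔_α^{m+1}(I(ℝ^d)). -/
def Lclass (d : ℕ) (α : ℝ) (m : ℕ) : Set (Measure (Ed d)) :=
  (QOp α)^[m + 1] (IDiv d)

/-- L_∞^⟨α⟩(ℝ^d) = ∩_{m ≥ 0} L_m^⟨α⟩(ℝ^d). -/
def LInf (d : ℕ) (α : ℝ) : Set (Measure (Ed d)) :=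
  ⋂ m : ℕ, Lclass d α m

end
namespace Stmt3Aux

open MeasureTheory Filter Complex
open scoped InnerProductSpace Topology BigOperators

variable {d : ℕ}

lemma cont_kern (z : Ed d) :
    Continuous fun x : Ed d => Complex.exp ((⟪z, x⟫_ℝ : ℂ) * Complex.I) :=
  Complex.continuous_exp.comp
    ((Complex.continuous_ofReal.comp (continuous_const.inner continuous_id)).mul continuous_const)

lemma norm_kern (r : ℝ) : ‖Complex.exp ((r : ℂ) * Complex.I)‖ = 1 := by
  simp [Complex.norm_exp]

lemma integrable_kern (μ : Measure (Ed d)) [IsFiniteMeasure μ] (z : Ed d) :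
    Integrable (fun x => Complex.exp ((⟪z, x⟫_ℝ : ℂ) * Complex.I)) μ := by
  refine Integrable.mono' (integrable_const 1) (cont_kern z).aestronglyMeasurable ?_
  exact Filter.Eventually.of_forall fun x => by rw [norm_kern]

lemma norm_charFn_le_one (μ : Measure (Ed d)) (hp : IsProbabilityMeasure μ) (z : Ed d) :
    ‖charFn μ z‖ ≤ 1 := by
  haveI := hp
  have := norm_integral_le_of_norm_le_const (μ := μ)
    (f := fun x => Complex.exp ((⟪z, x⟫_ℝ : ℂ) * Complex.I)) (C := 1)
    (Filter.Eventually.of_forall fun x => by rw [norm_kern])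
  simpa [charFn] using this

lemma charFn_zero (μ : Measure (Ed d)) (hp : IsProbabilityMeasure μ) : charFn μ 0 = 1 := by
  haveI := hp
  simp [charFn]

lemma charFn_dirac (γ z : Ed d) :
    charFn (Measure.dirac γ) z = Complex.exp ((⟪z, γ⟫_ℝ : ℂ) * Complex.I) := by
  rw [charFn, integral_dirac' _ _ (cont_kern z).stronglyMeasurable]

lemma charFn_conv (μ ν : Measure (Ed d)) (h1 : IsProbabilityMeasure μ)
    (h2 : IsProbabilityMeasure ν) (z : Ed d) :
    charFn (μ.conv ν) z = charFn μ z * charFn ν z := by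
  haveI := h1; haveI := h2
  rw [charFn, Measure.conv,
    integral_map (by fun_prop) (cont_kern z).aestronglyMeasurable]
  have hpt : ∀ p : Ed d × Ed d,
      Complex.exp ((⟪z, p.1 + p.2⟫_ℝ : ℂ) * Complex.I)
        = Complex.exp ((⟪z, p.1⟫_ℝ : ℂ) * Complex.I)
          * Complex.exp ((⟪z, p.2⟫_ℝ : ℂ) * Complex.I) := by
    intro p
    rw [inner_add_right, ← Complex.exp_add]
    push_cast
    ring_nf
  simp_rw [hpt]
  exact integral_prod_mul (fun x : Ed d => Complex.exp ((⟪z, x⟫_ℝ : ℂ) * Complex.I)) (fun y : Ed d => Complex.exp ((⟪z, y⟫_ℝ : ℂ) * Complex.I))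

lemma convPow_isProb (ν : Measure (Ed d)) (hν : IsProbabilityMeasure ν) (n : ℕ) :
    IsProbabilityMeasure (convPow ν n) := by
  haveI := hν
  induction n with
  | zero => exact Measure.dirac.isProbabilityMeasure
  | succ n ih => haveI := ih; exact inferInstanceAs (IsProbabilityMeasure ((convPow ν n).conv ν))

lemma charFn_convPow (ν : Measure (Ed d)) (hν : IsProbabilityMeasure ν) (n : ℕ) (z : Ed d) :
    charFn (convPow ν n) z = (charFn ν z) ^ n := by
  induction n with
  | zero => rw [pow_zero]; show charFn (Measure.dirac 0) z = 1; rw [charFn_dirac]; simp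
  | succ n ih =>
      show charFn ((convPow ν n).conv ν) z = _
      rw [charFn_conv _ _ (convPow_isProb ν hν n) hν, ih, pow_succ]

end Stmt3Aux
namespace Stmt3Aux

open MeasureTheory Filter Complex
open scoped InnerProductSpace Topology BigOperators

variable {d : ℕ}

lemma cumulant_cases (μ : Measure (Ed d)) :
    (Continuous (cumulant μ) ∧ cumulant μ 0 = 0 ∧
      ∀ z, charFn μ z = Complex.exp (cumulant μ z)) ∨ cumulant μ = 0 := by
  rw [cumulant]
  split_ifs with h
  · exact Or.inl h.choose_spec
  · exact Or.inr rfl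

/-- ψ_μ(w) = -Re C_μ(w). -/
noncomputable def psi (μ : Measure (Ed d)) (w : Ed d) : ℝ := -(cumulant μ w).re

lemma psi_zero (μ : Measure (Ed d)) : psi μ 0 = 0 := by
  rcases cumulant_cases μ with h | h
  · rw [psi, h.2.1]; simp
  · rw [psi, h]; simp

lemma psi_cont (μ : Measure (Ed d)) : Continuous (psi μ) := by
  rcases cumulant_cases μ with h | h
  · exact (Complex.continuous_re.comp h.1).neg
  · rw [show psi μ = fun _ => (0:ℝ) by funext w; rw [psi, h]; simp]
    exact continuous_const

lemma norm_exp_c (c : ℂ) : ‖Complex.exp c‖ = Real.exp c.re := by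
  rw [Complex.norm_exp]

lemma psi_nonneg (μ : Measure (Ed d)) (hp : IsProbabilityMeasure μ) (w : Ed d) :
    0 ≤ psi μ w := by
  rcases cumulant_cases μ with h | h
  · have h1 := norm_charFn_le_one μ hp w
    rw [h.2.2 w, norm_exp_c] at h1
    have := Real.exp_le_one_iff.mp h1
    rw [psi]; linarith
  · rw [psi, h]; simp

lemma norm_charFn_eq_exp (μ : Measure (Ed d))
    (h : ∀ z, charFn μ z = Complex.exp (cumulant μ z)) (w : Ed d) :
    ‖charFn μ w‖ = Real.exp (-(psi μ w)) := by
  rw [h w, norm_exp_c, psi, neg_neg]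

/-- Covariance inequality for characteristic functions. -/
lemma cov_ineq (μ : Measure (Ed d)) (hp : IsProbabilityMeasure μ) (s t : Ed d) :
    ‖charFn μ (s + t) - charFn μ s * charFn μ t‖
      ≤ Real.sqrt ((1 - ‖charFn μ s‖ ^ 2) * (1 - ‖charFn μ t‖ ^ 2)) := by
  haveI := hp
  set u : Ed d → ℂ := fun x => Complex.exp ((⟪s, x⟫_ℝ : ℂ) * Complex.I) with hu
  set v : Ed d → ℂ := fun x => Complex.exp ((⟪t, x⟫_ℝ : ℂ) * Complex.I) with hv
  set A : ℂ := charFn μ s with hA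
  set B : ℂ := charFn μ t with hB
  have hiu : Integrable u μ := integrable_kern μ s
  have hiv : Integrable v μ := integrable_kern μ t
  have hnu : ∀ x, ‖u x‖ = 1 := fun x => norm_kern _
  have hnv : ∀ x, ‖v x‖ = 1 := fun x => norm_kern _
  have huv : ∀ x, u x * v x = Complex.exp ((⟪s + t, x⟫_ℝ : ℂ) * Complex.I) := by
    intro x
    rw [hu, hv, inner_add_left, ← Complex.exp_add]
    push_cast; ring_nf
  have hiuv : Integrable (fun x => u x * v x) μ := by
    rw [show (fun x => u x * v x) = fun x => Complex.exp ((⟪s + t, x⟫_ℝ : ℂ) * Complex.I)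
      from funext huv]
    exact integrable_kern μ (s + t)
  -- the centered integral
  have hexp : ∀ x, (u x - A) * (v x - B) = u x * v x - A * v x - B * u x + A * B := by
    intro x; ring
  have hint : ∫ x, (u x - A) * (v x - B) ∂μ = charFn μ (s + t) - A * B := by
    rw [show (fun x => (u x - A) * (v x - B))
        = fun x => u x * v x - A * v x - B * u x + A * B from funext hexp]
    have i1 : Integrable (fun x => A * v x) μ := hiv.const_mul A
    have i2 : Integrable (fun x => B * u x) μ := hiu.const_mul B
    have i3 : Integrable (fun x => u x * v x - A * v x) μ := hiuv.sub i1
    have i4 : Integrable (fun x => u x * v x - A * v x - B * u x) μ := i3.sub i2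
    rw [integral_add i4 (integrable_const (A * B)), integral_sub i3 i2, integral_sub hiuv i1,
      integral_const_mul, integral_const_mul, integral_const]
    have : ∫ x, u x * v x ∂μ = charFn μ (s + t) := by
      rw [show (fun x => u x * v x) = fun x => Complex.exp ((⟪s + t, x⟫_ℝ : ℂ) * Complex.I)
        from funext huv]
      rfl
    rw [this]
    have hvB : ∫ a, v a ∂μ = B := rfl
    have huA : ∫ a, u a ∂μ = A := rfl
    rw [hvB, huA, probReal_univ, one_smul]; ring
  -- second moments
  have hsm : ∀ (w : Ed d → ℂ) (W : ℂ), Integrable w μ → (∀ x, ‖w x‖ = 1) →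
      (∫ x, w x ∂μ = W) → ∫ x, ‖w x - W‖ ^ 2 ∂μ = 1 - ‖W‖ ^ 2 := by
    intro w W hiw hnw hW
    have hpt : ∀ x, ‖w x - W‖ ^ 2 = 1 + Complex.normSq W - 2 * (w x * (starRingEnd ℂ) W).re := by
      intro x
      have hsq : ‖w x - W‖ ^ 2 = Complex.normSq (w x - W) := by
        rw [Complex.normSq_eq_norm_sq]
      have h1 : Complex.normSq (w x) = 1 := by
        rw [Complex.normSq_eq_norm_sq, hnw x]; norm_num
      rw [hsq, Complex.normSq_sub, h1]
    rw [show (fun x => ‖w x - W‖ ^ 2)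
        = fun x => 1 + Complex.normSq W - 2 * (w x * (starRingEnd ℂ) W).re from funext hpt]
    have hire : Integrable (fun x => (w x * (starRingEnd ℂ) W).re) μ := by
      have := Integrable.re (hiw.mul_const ((starRingEnd ℂ) W))
      simpa using this
    have i5 : Integrable (fun x => 2 * (w x * (starRingEnd ℂ) W).re) μ := hire.const_mul 2
    rw [integral_sub (integrable_const (1 + Complex.normSq W)) i5, integral_const_mul]
    have hre : ∫ x, (w x * (starRingEnd ℂ) W).re ∂μ = Complex.normSq W := by
      have h1 := integral_re (μ := μ) (f := fun x => w x * (starRingEnd ℂ) W)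
        (hiw.mul_const _)
      simp only [RCLike.re_to_complex] at h1
      rw [h1, integral_mul_const, hW, Complex.mul_conj]
      simp
    rw [hre, integral_const]
    have : ‖W‖ ^ 2 = Complex.normSq W := by rw [Complex.normSq_eq_norm_sq]
    rw [this]
    simp
    ring
  have h2A : ∫ x, ‖u x - A‖ ^ 2 ∂μ = 1 - ‖A‖ ^ 2 := hsm u A hiu hnu rfl
  have h2B : ∫ x, ‖v x - B‖ ^ 2 ∂μ = 1 - ‖B‖ ^ 2 := hsm v B hiv hnv rfl
  -- Cauchy–Schwarz
  have hmes1 : AEStronglyMeasurable (fun x => ‖u x - A‖) μ :=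
    ((cont_kern s).sub continuous_const).norm.aestronglyMeasurable
  have hmes2 : AEStronglyMeasurable (fun x => ‖v x - B‖) μ :=
    ((cont_kern t).sub continuous_const).norm.aestronglyMeasurable
  have hbd1 : ∀ᵐ x ∂μ, ‖‖u x - A‖‖ ≤ 1 + ‖A‖ := by
    refine Filter.Eventually.of_forall fun x => ?_
    rw [norm_norm]
    calc ‖u x - A‖ ≤ ‖u x‖ + ‖A‖ := norm_sub_le _ _
    _ = 1 + ‖A‖ := by rw [hnu x]
  have hbd2 : ∀ᵐ x ∂μ, ‖‖v x - B‖‖ ≤ 1 + ‖B‖ := by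
    refine Filter.Eventually.of_forall fun x => ?_
    rw [norm_norm]
    calc ‖v x - B‖ ≤ ‖v x‖ + ‖B‖ := norm_sub_le _ _
    _ = 1 + ‖B‖ := by rw [hnv x]
  have hcs : ∫ x, ‖u x - A‖ * ‖v x - B‖ ∂μ
      ≤ (∫ x, ‖u x - A‖ ^ (2:ℝ) ∂μ) ^ (1/(2:ℝ)) * (∫ x, ‖v x - B‖ ^ (2:ℝ) ∂μ) ^ (1/(2:ℝ)) := by
    refine integral_mul_le_Lp_mul_Lq_of_nonneg ⟨by norm_num, by norm_num, by norm_num⟩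
      (Filter.Eventually.of_forall fun x => norm_nonneg _)
      (Filter.Eventually.of_forall fun x => norm_nonneg _)
      (MemLp.of_bound hmes1 _ hbd1) (MemLp.of_bound hmes2 _ hbd2)
  have hrpow : ∀ (f : Ed d → ℂ) (W : ℂ), (fun x => ‖f x - W‖ ^ (2:ℝ)) = fun x => ‖f x - W‖ ^ (2:ℕ) := by
    intro f W; funext x
    rw [← Real.rpow_natCast ‖f x - W‖ 2]; norm_num
  rw [hrpow u A, hrpow v B] at hcs
  rw [h2A, h2B] at hcs
  have hA1 : ‖A‖ ≤ 1 := norm_charFn_le_one μ hp s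
  have hB1 : ‖B‖ ≤ 1 := norm_charFn_le_one μ hp t
  have hA2 : (0:ℝ) ≤ 1 - ‖A‖ ^ 2 := by nlinarith [norm_nonneg A]
  have hB2 : (0:ℝ) ≤ 1 - ‖B‖ ^ 2 := by nlinarith [norm_nonneg B]
  calc ‖charFn μ (s + t) - A * B‖ = ‖∫ x, (u x - A) * (v x - B) ∂μ‖ := by rw [hint]
    _ ≤ ∫ x, ‖(u x - A) * (v x - B)‖ ∂μ := norm_integral_le_integral_norm _
    _ = ∫ x, ‖u x - A‖ * ‖v x - B‖ ∂μ := by simp_rw [norm_mul]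
    _ ≤ (1 - ‖A‖ ^ 2) ^ (1/(2:ℝ)) * (1 - ‖B‖ ^ 2) ^ (1/(2:ℝ)) := hcs
    _ = Real.sqrt ((1 - ‖A‖ ^ 2) * (1 - ‖B‖ ^ 2)) := by
        rw [← Real.sqrt_eq_rpow, ← Real.sqrt_eq_rpow, ← Real.sqrt_mul hA2]

lemma norm_charFn_add_ge (μ : Measure (Ed d)) (hp : IsProbabilityMeasure μ) (s t : Ed d) :
    ‖charFn μ s‖ * ‖charFn μ t‖
        - Real.sqrt ((1 - ‖charFn μ s‖ ^ 2) * (1 - ‖charFn μ t‖ ^ 2))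
      ≤ ‖charFn μ (s + t)‖ := by
  have h1 := cov_ineq μ hp s t
  have h2 : ‖charFn μ s * charFn μ t‖ - ‖charFn μ (s + t)‖
      ≤ ‖charFn μ (s + t) - charFn μ s * charFn μ t‖ := by
    rw [norm_sub_rev]
    exact norm_sub_norm_le _ _
  rw [norm_mul] at h2
  linarith

lemma norm_charFn_root (ν μ : Measure (Ed d)) (hν : IsProbabilityMeasure ν) {n : ℕ}
    (hn : 1 ≤ n) (hconv : convPow ν n = μ) (z : Ed d) :
    ‖charFn ν z‖ = ‖charFn μ z‖ ^ ((n : ℝ)⁻¹) := by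
  have h1 : ‖charFn μ z‖ = ‖charFn ν z‖ ^ n := by
    rw [← hconv, charFn_convPow ν hν, norm_pow]
  rw [h1, ← Real.rpow_natCast ‖charFn ν z‖ n, ← Real.rpow_mul (norm_nonneg _)]
  rw [mul_inv_cancel₀ (by exact_mod_cast Nat.one_le_iff_ne_zero.mp hn : (n:ℝ) ≠ 0), Real.rpow_one]

end Stmt3Aux
namespace Stmt3Aux

open MeasureTheory Filter Complex
open scoped InnerProductSpace Topology BigOperators

variable {d : ℕ}

lemma tendsto_n_one_sub_exp (x : ℝ) :
    Tendsto (fun n : ℕ => (n : ℝ) * (1 - Real.exp (-x / n))) atTop (𝓝 x) := by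
  rcases eq_or_ne x 0 with hx | hx
  · subst hx
    simp
  · have hder : HasDerivAt (fun h : ℝ => 1 - Real.exp (-h)) 1 0 := by
      have h1 : HasDerivAt (fun h : ℝ => Real.exp (-h)) (-1) 0 := by
        have := (Real.hasDerivAt_exp (-0)).comp 0 (hasDerivAt_neg 0)
        simpa [Function.comp_def] using this
      simpa using h1.const_sub 1
    have hslope := hasDerivAt_iff_tendsto_slope.mp hder
    have harg : Tendsto (fun n : ℕ => x / n) atTop (𝓝[≠] 0) := by
      apply tendsto_nhdsWithin_of_tendsto_nhds_of_eventually_within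
      · exact tendsto_const_div_atTop_nhds_zero_nat x
      · filter_upwards [eventually_ge_atTop 1] with n hn
        have : (n : ℝ) ≠ 0 := by positivity
        exact div_ne_zero hx this
    have hcomp := hslope.comp harg
    have heq : ∀ᶠ n : ℕ in atTop,
        x * slope (fun h : ℝ => 1 - Real.exp (-h)) 0 (x / n)
          = (n : ℝ) * (1 - Real.exp (-x / n)) := by
      filter_upwards [eventually_ge_atTop 1] with n hn
      have hn0 : (n : ℝ) ≠ 0 := by positivity
      rw [slope_def_field]
      field_simp
      ring_nf
      have hxx : x * x⁻¹ = 1 := mul_inv_cancel₀ hx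
      rw [Real.exp_zero]
      linear_combination (1 - Real.exp (-(x * (↑n)⁻¹))) * hxx
    have := (hcomp.const_mul x).congr' heq
    simpa using this

lemma tendsto_pure_limit (A B : ℝ) (hA : 0 ≤ A) (hB : 0 ≤ B) (L : ℝ) (hL0 : 0 ≤ L)
    (hL : ∀ n : ℕ, 1 ≤ n →
      Real.exp (-(A + B) / n)
          - Real.sqrt ((1 - Real.exp (-(2 * A) / n)) * (1 - Real.exp (-(2 * B) / n)))
        ≤ L ^ ((n : ℝ)⁻¹)) :
    Real.exp (-((Real.sqrt A + Real.sqrt B) ^ 2)) ≤ L := by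
  set D : ℝ := A + B + 2 * Real.sqrt (A * B) with hD
  have hD0 : 0 ≤ D := by positivity
  have hDeq : (Real.sqrt A + Real.sqrt B) ^ 2 = D := by
    rw [add_sq, Real.sq_sqrt hA, Real.sq_sqrt hB, mul_assoc, ← Real.sqrt_mul hA B, hD]
    ring
  rw [hDeq]
  -- e n and its n(1-e n) limit
  set e : ℕ → ℝ := fun n => Real.exp (-(A + B) / n)
      - Real.sqrt ((1 - Real.exp (-(2 * A) / n)) * (1 - Real.exp (-(2 * B) / n))) with he
  have hc : Tendsto (fun n : ℕ => (n : ℝ) * (1 - e n)) atTop (𝓝 D) := by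
    have h1 := tendsto_n_one_sub_exp (A + B)
    have h2 : Tendsto (fun n : ℕ => (n : ℝ) *
        Real.sqrt ((1 - Real.exp (-(2 * A) / n)) * (1 - Real.exp (-(2 * B) / n))))
        atTop (𝓝 (2 * Real.sqrt (A * B))) := by
      have heq : ∀ n : ℕ, (n : ℝ) *
          Real.sqrt ((1 - Real.exp (-(2 * A) / n)) * (1 - Real.exp (-(2 * B) / n)))
            = Real.sqrt (((n : ℝ) * (1 - Real.exp (-(2 * A) / n)))
              * ((n : ℝ) * (1 - Real.exp (-(2 * B) / n)))) := by
        intro n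
        rw [show ((n : ℝ) * (1 - Real.exp (-(2 * A) / n)))
            * ((n : ℝ) * (1 - Real.exp (-(2 * B) / n)))
            = (n : ℝ) ^ 2 * ((1 - Real.exp (-(2 * A) / n)) * (1 - Real.exp (-(2 * B) / n)))
          by ring, Real.sqrt_mul (sq_nonneg _), Real.sqrt_sq (Nat.cast_nonneg n)]
      simp_rw [heq]
      have hmul := (tendsto_n_one_sub_exp (2 * A)).mul (tendsto_n_one_sub_exp (2 * B))
      have hsq := (Real.continuous_sqrt.tendsto (2 * A * (2 * B))).comp hmul
      have : Real.sqrt (2 * A * (2 * B)) = 2 * Real.sqrt (A * B) := by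
        rw [show 2 * A * (2 * B) = 4 * (A * B) by ring,
          Real.sqrt_mul (by norm_num : (0:ℝ) ≤ 4),
          show (4:ℝ) = 2 ^ 2 by norm_num, Real.sqrt_sq (by norm_num : (0:ℝ) ≤ 2)]
      rw [this] at hsq
      exact hsq
    have heq2 : ∀ n : ℕ, (n : ℝ) * (1 - e n)
        = (n : ℝ) * (1 - Real.exp (-(A + B) / n))
          + (n : ℝ) * Real.sqrt ((1 - Real.exp (-(2 * A) / n)) * (1 - Real.exp (-(2 * B) / n))) := by
      intro n; rw [he]; ring
    simp_rw [heq2]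
    have := h1.add h2
    convert this using 2
  -- for every ε > 0, exp (-(D+ε)) ≤ L
  have key : ∀ ε : ℝ, 0 < ε → Real.exp (-(D + ε)) ≤ L := by
    intro ε hε
    have hDε : 0 < D + ε := by linarith
    have hev : ∀ᶠ n : ℕ in atTop, (1 - (D + ε) / n) ^ n ≤ L := by
      have hev1 : ∀ᶠ n : ℕ in atTop, (n : ℝ) * (1 - e n) ≤ D + ε := by
        have := hc.eventually_le_const (by linarith : D < D + ε)
        exact this
      have hev2 : ∀ᶠ n : ℕ in atTop, (D + ε) / (n : ℝ) ≤ 1 := by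
        filter_upwards [eventually_ge_atTop (Nat.ceil (D + ε) + 1)] with n hn
        have h1 : D + ε ≤ (n : ℝ) := by
          calc D + ε ≤ (Nat.ceil (D + ε) : ℝ) := Nat.le_ceil _
          _ ≤ (n : ℝ) := by exact_mod_cast Nat.le_of_succ_le hn
        rw [div_le_one (by linarith : (0:ℝ) < n)]
        exact h1
      filter_upwards [hev1, hev2, eventually_ge_atTop 1] with n h1 h2 hn1
      have hn0 : (0 : ℝ) < n := by positivity
      have hbase : 0 ≤ 1 - (D + ε) / n := by linarith
      have hle : 1 - (D + ε) / n ≤ e n := by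
        have h5 : (n : ℝ) - (D + ε) ≤ (n : ℝ) * e n := by nlinarith
        calc 1 - (D + ε) / n = ((n : ℝ) - (D + ε)) / n := by field_simp
        _ ≤ ((n : ℝ) * e n) / n := (div_le_div_iff_of_pos_right hn0).mpr h5
        _ = e n := by field_simp
      calc (1 - (D + ε) / n) ^ n ≤ (e n) ^ n := pow_le_pow_left₀ hbase hle n
      _ ≤ (L ^ ((n : ℝ)⁻¹)) ^ n := by
          apply pow_le_pow_left₀ (le_trans hbase hle)
          exact hL n hn1
      _ = L := by
          rw [← Real.rpow_natCast (L ^ ((n:ℝ)⁻¹)) n, ← Real.rpow_mul hL0,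
            inv_mul_cancel₀ (by positivity : (n:ℝ) ≠ 0), Real.rpow_one]
    have htend : Tendsto (fun n : ℕ => (1 - (D + ε) / n) ^ n) atTop (𝓝 (Real.exp (-(D + ε)))) := by
      have := Real.tendsto_one_add_div_pow_exp (-(D + ε))
      convert this using 3 with n
      · ring
    exact le_of_tendsto htend hev
  -- conclude
  have htend2 : Tendsto (fun k : ℕ => Real.exp (-(D + 1 / (k + 1)))) atTop (𝓝 (Real.exp (-D))) := by
    have h0 : Tendsto (fun k : ℕ => -(D + 1 / ((k : ℝ) + 1))) atTop (𝓝 (-D)) := by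
      have h1 : Tendsto (fun k : ℕ => D + 1 / ((k : ℝ) + 1)) atTop (𝓝 (D + 0)) :=
        tendsto_const_nhds.add tendsto_one_div_add_atTop_nhds_zero_nat
      rw [add_zero] at h1
      exact h1.neg
    exact (Real.continuous_exp.tendsto (-D)).comp h0
  apply le_of_tendsto htend2
  filter_upwards with k
  exact key (1 / (k + 1)) (by positivity)

end Stmt3Aux
namespace Stmt3Aux

open MeasureTheory Filter Complex
open scoped InnerProductSpace Topology BigOperators

variable {d : ℕ}

lemma psi_sqrt_subadd (μ : Measure (Ed d)) (hμ : μ ∈ IDiv d) (s t : Ed d) :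
    Real.sqrt (psi μ (s + t)) ≤ Real.sqrt (psi μ s) + Real.sqrt (psi μ t) := by
  obtain ⟨hprob, hdiv⟩ := hμ
  rcases cumulant_cases μ with hspec | h0
  swap
  · have : psi μ (s + t) = 0 := by rw [psi, h0]; simp
    rw [this, Real.sqrt_zero]
    positivity
  set A := psi μ s with hA
  set B := psi μ t with hB
  have hA0 : 0 ≤ A := psi_nonneg μ hprob s
  have hB0 : 0 ≤ B := psi_nonneg μ hprob t
  have hncs : ‖charFn μ s‖ = Real.exp (-A) := norm_charFn_eq_exp μ hspec.2.2 s
  have hnct : ‖charFn μ t‖ = Real.exp (-B) := norm_charFn_eq_exp μ hspec.2.2 t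
  have hnst : ‖charFn μ (s + t)‖ = Real.exp (-(psi μ (s + t))) :=
    norm_charFn_eq_exp μ hspec.2.2 (s + t)
  set L : ℝ := ‖charFn μ (s + t)‖ with hL
  have hL0 : 0 ≤ L := norm_nonneg _
  have hLbound : ∀ n : ℕ, 1 ≤ n →
      Real.exp (-(A + B) / n)
          - Real.sqrt ((1 - Real.exp (-(2 * A) / n)) * (1 - Real.exp (-(2 * B) / n)))
        ≤ L ^ ((n : ℝ)⁻¹) := by
    intro n hn
    obtain ⟨ν, hν, hconv⟩ := hdiv n hn
    have hroot := fun z => norm_charFn_root ν μ hν hn hconv z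
    have h1 := norm_charFn_add_ge ν hν s t
    have hn0 : (n : ℝ) ≠ 0 := by
      exact_mod_cast Nat.one_le_iff_ne_zero.mp hn
    have hre : ∀ x : ℝ, Real.exp x ^ ((n : ℝ)⁻¹) = Real.exp (x / n) := by
      intro x
      rw [← Real.exp_mul, ← div_eq_mul_inv]
    have hsq2 : ∀ x : ℝ, Real.exp x ^ (2 : ℕ) = Real.exp (2 * x) := by
      intro x
      rw [← Real.exp_nat_mul]
      norm_num
    rw [hroot s, hroot t, hroot (s + t), hnct, hncs] at h1
    rw [hre, hre] at h1
    rw [hsq2, hsq2, ← Real.exp_add] at h1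
    calc Real.exp (-(A + B) / n)
          - Real.sqrt ((1 - Real.exp (-(2 * A) / n)) * (1 - Real.exp (-(2 * B) / n)))
        = Real.exp (-A / n + -B / n)
          - Real.sqrt ((1 - Real.exp (2 * (-A / n))) * (1 - Real.exp (2 * (-B / n)))) := by
          rw [show -(A + B) / (n:ℝ) = -A / n + -B / n by ring,
            show (2:ℝ) * (-A / n) = -(2 * A) / n by ring,
            show (2:ℝ) * (-B / n) = -(2 * B) / n by ring]
      _ ≤ L ^ ((n : ℝ)⁻¹) := h1
  have hfin := tendsto_pure_limit A B hA0 hB0 L hL0 hLbound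
  rw [hnst] at hfin
  have hexp := Real.exp_le_exp.mp hfin
  have hP : psi μ (s + t) ≤ (Real.sqrt A + Real.sqrt B) ^ 2 := by linarith
  calc Real.sqrt (psi μ (s + t)) ≤ Real.sqrt ((Real.sqrt A + Real.sqrt B) ^ 2) :=
        Real.sqrt_le_sqrt hP
    _ = Real.sqrt A + Real.sqrt B := Real.sqrt_sq (by positivity)

end Stmt3Aux
namespace Stmt3Aux

open MeasureTheory Filter Complex
open scoped InnerProductSpace Topology BigOperators

variable {d : ℕ}

lemma forall_norm_charFn_eq_one {α : ℝ} (hα : 2 < α) {H : Set (Measure (Ed d))}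
    {μ : Measure (Ed d)} (hμ : μ ∈ QOp α H) : ∀ z : Ed d, ‖charFn μ z‖ = 1 := by
  obtain ⟨hprob, μs, j0, a, p, c, hID, -, ha_pos, ha_mono, ha_top, -, hp_pos, hpa, hconv⟩ := hμ
  set S : ℕ → Ed d → ℝ := fun n w => ∑ j ∈ Finset.range n, psi (μs j) w with hSdef
  have hprob_j : ∀ j, IsProbabilityMeasure (μs j) := fun j => (hID j).1
  -- Step 1 : modulus convergence
  have step1 : ∀ w : Ed d, Tendsto (fun n => Real.exp (-(p n * S n ((a n)⁻¹ • w)))) atTop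
      (𝓝 ‖charFn μ w‖) := by
    intro w
    have h0 := (hconv w).norm
    have heq : ∀ n, ‖(∏ j ∈ Finset.range n,
          Complex.exp ((p n : ℂ) * cumulant (μs j) ((a n)⁻¹ • w)))
          * Complex.exp ((⟪c n, w⟫_ℝ : ℂ) * Complex.I)‖
        = Real.exp (-(p n * S n ((a n)⁻¹ • w))) := by
      intro n
      rw [norm_mul, norm_kern, mul_one, norm_prod]
      have h1 : ∀ j ∈ Finset.range n,
          ‖Complex.exp ((p n : ℂ) * cumulant (μs j) ((a n)⁻¹ • w))‖
            = Real.exp (p n * (cumulant (μs j) ((a n)⁻¹ • w)).re) := by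
        intro j _
        rw [norm_exp_c]
        congr 1
        simp [Complex.mul_re]
      rw [Finset.prod_congr rfl h1, ← Real.exp_sum]
      congr 1
      simp only [hSdef, psi]
      rw [Finset.mul_sum, ← Finset.sum_neg_distrib]
      apply Finset.sum_congr rfl
      intro j _
      ring
    exact Tendsto.congr heq h0
  -- basic facts about S
  have hS_nonneg : ∀ n w, 0 ≤ S n w :=
    fun n w => Finset.sum_nonneg fun j _ => psi_nonneg _ (hprob_j j) w
  have hS_mono : ∀ {n k : ℕ}, n ≤ k → ∀ w, S n w ≤ S k w := by
    intro n k h w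
    exact Finset.sum_le_sum_of_subset_of_nonneg (Finset.range_subset_range.mpr h)
      (fun j _ _ => psi_nonneg _ (hprob_j j) w)
  have hS_zero : ∀ n, S n 0 = 0 := fun n => Finset.sum_eq_zero fun j _ => psi_zero _
  have hS_cont : ∀ n, Continuous (S n) := fun n => continuous_finset_sum _ fun j _ => psi_cont _
  have hS_sub : ∀ n (v w : Ed d),
      Real.sqrt (S n (v + w)) ≤ Real.sqrt (S n v) + Real.sqrt (S n w) := by
    intro n v w
    have key : S n (v + w) ≤ (Real.sqrt (S n v) + Real.sqrt (S n w)) ^ 2 := by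
      have h1 : ∀ j ∈ Finset.range n, psi (μs j) (v + w)
          ≤ (Real.sqrt (psi (μs j) v) + Real.sqrt (psi (μs j) w)) ^ 2 := by
        intro j _
        have hsub := psi_sqrt_subadd (μs j) (hID j) v w
        have h2 : psi (μs j) (v + w) = Real.sqrt (psi (μs j) (v + w)) ^ 2 :=
          (Real.sq_sqrt (psi_nonneg _ (hprob_j j) _)).symm
        rw [h2]
        exact pow_le_pow_left₀ (Real.sqrt_nonneg _) hsub 2
      have h3 := Finset.sum_le_sum h1
      have h4 : ∑ j ∈ Finset.range n,
            (Real.sqrt (psi (μs j) v) + Real.sqrt (psi (μs j) w)) ^ 2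
          = S n v + S n w
            + 2 * ∑ j ∈ Finset.range n,
                Real.sqrt (psi (μs j) v) * Real.sqrt (psi (μs j) w) := by
        have hexp : ∀ j ∈ Finset.range n,
            (Real.sqrt (psi (μs j) v) + Real.sqrt (psi (μs j) w)) ^ 2
              = psi (μs j) v + psi (μs j) w
                + 2 * (Real.sqrt (psi (μs j) v) * Real.sqrt (psi (μs j) w)) := by
          intro j _
          rw [add_sq, Real.sq_sqrt (psi_nonneg _ (hprob_j j) _),
            Real.sq_sqrt (psi_nonneg _ (hprob_j j) _)]
          ring
        rw [Finset.sum_congr rfl hexp, Finset.sum_add_distrib, Finset.sum_add_distrib,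
          ← Finset.mul_sum]
      have h5 : ∑ j ∈ Finset.range n, Real.sqrt (psi (μs j) v) * Real.sqrt (psi (μs j) w)
          ≤ Real.sqrt (S n v) * Real.sqrt (S n w) := by
        have hcs := Finset.sum_mul_sq_le_sq_mul_sq (Finset.range n)
          (fun j => Real.sqrt (psi (μs j) v)) (fun j => Real.sqrt (psi (μs j) w))
        have hv : ∀ j ∈ Finset.range n, Real.sqrt (psi (μs j) v) ^ 2 = psi (μs j) v :=
          fun j _ => Real.sq_sqrt (psi_nonneg _ (hprob_j j) _)
        have hw : ∀ j ∈ Finset.range n, Real.sqrt (psi (μs j) w) ^ 2 = psi (μs j) w :=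
          fun j _ => Real.sq_sqrt (psi_nonneg _ (hprob_j j) _)
        rw [Finset.sum_congr rfl hv, Finset.sum_congr rfl hw] at hcs
        have hnn : 0 ≤ ∑ j ∈ Finset.range n,
            Real.sqrt (psi (μs j) v) * Real.sqrt (psi (μs j) w) :=
          Finset.sum_nonneg fun j _ => mul_nonneg (Real.sqrt_nonneg _) (Real.sqrt_nonneg _)
        have h6 := Real.sqrt_le_sqrt hcs
        rw [Real.sqrt_sq hnn, Real.sqrt_mul (hS_nonneg n v)] at h6
        exact h6
      have h7 : (Real.sqrt (S n v) + Real.sqrt (S n w)) ^ 2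
          = S n v + S n w + 2 * (Real.sqrt (S n v) * Real.sqrt (S n w)) := by
        rw [add_sq, Real.sq_sqrt (hS_nonneg n v), Real.sq_sqrt (hS_nonneg n w)]
        ring
      rw [h7]
      calc S n (v + w) ≤ _ := h3
        _ = _ := h4
        _ ≤ _ := by linarith
    calc Real.sqrt (S n (v + w))
        ≤ Real.sqrt ((Real.sqrt (S n v) + Real.sqrt (S n w)) ^ 2) := Real.sqrt_le_sqrt key
      _ = _ := Real.sqrt_sq (by positivity)
  have hS_nsmul : ∀ n (m : ℕ) (v : Ed d),
      Real.sqrt (S n ((m : ℝ) • v)) ≤ (m : ℝ) * Real.sqrt (S n v) := by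
    intro n m v
    induction m with
    | zero => simp [hS_zero]
    | succ m ih =>
        have hsm : ((m + 1 : ℕ) : ℝ) • v = (m : ℝ) • v + v := by
          push_cast
          rw [add_smul, one_smul]
        rw [hsm]
        calc Real.sqrt (S n ((m : ℝ) • v + v))
            ≤ Real.sqrt (S n ((m : ℝ) • v)) + Real.sqrt (S n v) := hS_sub n _ _
          _ ≤ (m : ℝ) * Real.sqrt (S n v) + Real.sqrt (S n v) := by linarith
          _ = ((m + 1 : ℕ) : ℝ) * Real.sqrt (S n v) := by push_cast; ring
  -- Step 3 : if the modulus is nonzero it is one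
  have step3 : ∀ w : Ed d, ‖charFn μ w‖ ≠ 0 → ‖charFn μ w‖ = 1 := by
    intro w hw
    have hF0 : 0 < ‖charFn μ w‖ := lt_of_le_of_ne (norm_nonneg _) (Ne.symm hw)
    have hE_tend : Tendsto (fun n => p n * S n ((a n)⁻¹ • w)) atTop
        (𝓝 (-Real.log ‖charFn μ w‖)) := by
      have h1 := ((Real.continuousAt_log (ne_of_gt hF0)).tendsto).comp (step1 w)
      have h2 : ∀ n : ℕ, Real.log (Real.exp (-(p n * S n ((a n)⁻¹ • w))))
          = -(p n * S n ((a n)⁻¹ • w)) := fun n => Real.log_exp _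
      have h3 := (Tendsto.congr h2 h1).neg
      simpa using h3
    have hEzero : ∀ n, p n * S n ((a n)⁻¹ • w) = 0 := by
      intro n
      have hkey : ∀ k, n ≤ k → Real.sqrt (p n * S n ((a n)⁻¹ • w))
          ≤ (Real.sqrt (p n) / a n)
              * ((a k / Real.sqrt (p k)) * Real.sqrt (p k * S k ((a k)⁻¹ • w)))
            + Real.sqrt (p n)
              * Real.sqrt (S n (((a k / a n - (⌊a k / a n⌋₊ : ℝ)) * (a k)⁻¹) • w)) := by
        intro k hk
        have hak := ha_pos k
        have han := ha_pos n
        have hpk := hp_pos k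
        have hpn := hp_pos n
        set m : ℕ := ⌊a k / a n⌋₊ with hm
        set θ : ℝ := a k / a n - (m : ℝ) with hθ
        have hr0 : 0 ≤ a k / a n := div_nonneg hak.le han.le
        have hfl : (m : ℝ) ≤ a k / a n := Nat.floor_le hr0
        have hθ0 : 0 ≤ θ := by rw [hθ]; linarith
        have hdecomp : (a n)⁻¹ • w = (m : ℝ) • ((a k)⁻¹ • w) + (θ * (a k)⁻¹) • w := by
          rw [smul_smul, ← add_smul]
          congr 1
          rw [hθ]
          field_simp
          ring
        have c0 : Real.sqrt (S n ((a n)⁻¹ • w))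
            ≤ (m : ℝ) * Real.sqrt (S n ((a k)⁻¹ • w))
              + Real.sqrt (S n ((θ * (a k)⁻¹) • w)) := by
          rw [hdecomp]
          calc Real.sqrt (S n ((m : ℝ) • ((a k)⁻¹ • w) + (θ * (a k)⁻¹) • w))
              ≤ Real.sqrt (S n ((m : ℝ) • ((a k)⁻¹ • w)))
                + Real.sqrt (S n ((θ * (a k)⁻¹) • w)) := hS_sub n _ _
            _ ≤ _ := by linarith [hS_nsmul n m ((a k)⁻¹ • w)]
        have c1 : Real.sqrt (S n ((a k)⁻¹ • w)) ≤ Real.sqrt (S k ((a k)⁻¹ • w)) :=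
          Real.sqrt_le_sqrt (hS_mono hk _)
        have c2 : Real.sqrt (S k ((a k)⁻¹ • w))
            = Real.sqrt (p k * S k ((a k)⁻¹ • w)) / Real.sqrt (p k) := by
          rw [Real.sqrt_mul hpk.le]
          field_simp
        have hsqrtpn : 0 < Real.sqrt (p n) := Real.sqrt_pos.mpr hpn
        calc Real.sqrt (p n * S n ((a n)⁻¹ • w))
            = Real.sqrt (p n) * Real.sqrt (S n ((a n)⁻¹ • w)) := Real.sqrt_mul hpn.le _
          _ ≤ Real.sqrt (p n) * ((m : ℝ) * Real.sqrt (S n ((a k)⁻¹ • w))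
              + Real.sqrt (S n ((θ * (a k)⁻¹) • w))) := by
              apply mul_le_mul_of_nonneg_left c0 hsqrtpn.le
          _ = Real.sqrt (p n) * (m : ℝ) * Real.sqrt (S n ((a k)⁻¹ • w))
              + Real.sqrt (p n) * Real.sqrt (S n ((θ * (a k)⁻¹) • w)) := by ring
          _ ≤ Real.sqrt (p n) * (m : ℝ)
                * (Real.sqrt (p k * S k ((a k)⁻¹ • w)) / Real.sqrt (p k))
              + Real.sqrt (p n) * Real.sqrt (S n ((θ * (a k)⁻¹) • w)) := by
              have := mul_le_mul_of_nonneg_left (c1.trans_eq c2)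
                (mul_nonneg (Real.sqrt_nonneg (p n)) (Nat.cast_nonneg m) :
                  (0:ℝ) ≤ Real.sqrt (p n) * (m : ℝ))
              linarith [this]
          _ ≤ (Real.sqrt (p n) / a n)
                * ((a k / Real.sqrt (p k)) * Real.sqrt (p k * S k ((a k)⁻¹ • w)))
              + Real.sqrt (p n) * Real.sqrt (S n ((θ * (a k)⁻¹) • w)) := by
              refine add_le_add ?_ le_rfl
              set X : ℝ := Real.sqrt (p k * S k ((a k)⁻¹ • w)) with hX
              have hXnn : 0 ≤ X := Real.sqrt_nonneg _
              have hbase : 0 ≤ Real.sqrt (p n) * X * (Real.sqrt (p k))⁻¹ :=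
                mul_nonneg (mul_nonneg (Real.sqrt_nonneg _) hXnn)
                  (inv_nonneg.mpr (Real.sqrt_nonneg _))
              calc Real.sqrt (p n) * (m : ℝ) * (X / Real.sqrt (p k))
                  = (Real.sqrt (p n) * X * (Real.sqrt (p k))⁻¹) * (m : ℝ) := by ring
                _ ≤ (Real.sqrt (p n) * X * (Real.sqrt (p k))⁻¹) * (a k / a n) :=
                    mul_le_mul_of_nonneg_left hfl hbase
                _ = (Real.sqrt (p n) / a n) * ((a k / Real.sqrt (p k)) * X) := by ring
      -- the RHS of hkey tends to 0
      have hterm1 : Tendsto (fun k => (Real.sqrt (p n) / a n)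
          * ((a k / Real.sqrt (p k)) * Real.sqrt (p k * S k ((a k)⁻¹ • w)))) atTop (𝓝 0) := by
        have hak_div : Tendsto (fun k => a k / Real.sqrt (p k)) atTop (𝓝 0) := by
          have heq : ∀ k, a k / Real.sqrt (p k) = Real.sqrt (a k ^ 2 / p k) := by
            intro k
            rw [Real.sqrt_div (sq_nonneg (a k)), Real.sqrt_sq (ha_pos k).le]
          have h2 : Tendsto (fun k => a k ^ 2 / p k) atTop (𝓝 0) := by
            have hre : ∀ k, a k ^ 2 / p k = (a k) ^ ((2:ℝ) - α) * ((a k) ^ α / p k) := by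
              intro k
              have hak := ha_pos k
              have hpk := hp_pos k
              have hne1 : (a k) ^ α ≠ 0 := (Real.rpow_pos_of_pos hak α).ne'
              rw [Real.rpow_sub hak, ← Real.rpow_natCast (a k) 2]
              push_cast
              field_simp
            have hfac1 : Tendsto (fun k => (a k) ^ ((2:ℝ) - α)) atTop (𝓝 0) := by
              have h3 := (tendsto_rpow_neg_atTop (by linarith : (0:ℝ) < α - 2)).comp ha_top
              have h4 : ∀ k, (a k) ^ (-(α - 2)) = (a k) ^ ((2:ℝ) - α) := by
                intro k; congr 1; ring
              exact Tendsto.congr h4 h3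
            have hfac2 : Tendsto (fun k => (a k) ^ α / p k) atTop (𝓝 1) := by
              have h5 := hpa.inv₀ one_ne_zero
              have h6 : ∀ k, (p k / (a k) ^ α)⁻¹ = (a k) ^ α / p k := fun k => inv_div _ _
              have h7 := Tendsto.congr h6 h5
              rw [inv_one] at h7
              exact h7
            have h8 := hfac1.mul hfac2
            rw [zero_mul] at h8
            exact Tendsto.congr (fun k => (hre k).symm) h8
          have h9 := (Real.continuous_sqrt.tendsto 0).comp h2
          rw [Real.sqrt_zero] at h9
          exact Tendsto.congr (fun k => (heq k).symm) h9
        have hsqE : Tendsto (fun k => Real.sqrt (p k * S k ((a k)⁻¹ • w))) atTop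
            (𝓝 (Real.sqrt (-Real.log ‖charFn μ w‖))) :=
          (Real.continuous_sqrt.tendsto _).comp hE_tend
        have h10 := (hak_div.mul hsqE).const_mul (Real.sqrt (p n) / a n)
        rw [zero_mul, mul_zero] at h10
        exact h10
      have hterm2 : Tendsto (fun k => Real.sqrt (p n)
          * Real.sqrt (S n (((a k / a n - (⌊a k / a n⌋₊ : ℝ)) * (a k)⁻¹) • w))) atTop (𝓝 0) := by
        have harg0 : Tendsto (fun k => (a k / a n - (⌊a k / a n⌋₊ : ℝ)) * (a k)⁻¹) atTop (𝓝 0) := by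
          have hup : Tendsto (fun k => (a k)⁻¹) atTop (𝓝 0) := by
            have := ha_top.inv_tendsto_atTop
            exact this
          apply squeeze_zero (fun k => ?_) (fun k => ?_) hup
          · have hr0 : 0 ≤ a k / a n := div_nonneg (ha_pos k).le (ha_pos n).le
            have hfl : ((⌊a k / a n⌋₊ : ℕ) : ℝ) ≤ a k / a n := Nat.floor_le hr0
            have h1 : 0 ≤ a k / a n - (⌊a k / a n⌋₊ : ℝ) := by linarith
            exact mul_nonneg h1 (inv_nonneg.mpr (ha_pos k).le)
          · have hlt := Nat.lt_floor_add_one (a k / a n)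
            have h1 : a k / a n - (⌊a k / a n⌋₊ : ℝ) ≤ 1 := by linarith
            have h2 : (0:ℝ) ≤ (a k)⁻¹ := inv_nonneg.mpr (ha_pos k).le
            have hr0 : 0 ≤ a k / a n := div_nonneg (ha_pos k).le (ha_pos n).le
            have h3 : 0 ≤ a k / a n - (⌊a k / a n⌋₊ : ℝ) := by
              have := Nat.floor_le hr0
              linarith
            nlinarith
        have harg : Tendsto (fun k => ((a k / a n - (⌊a k / a n⌋₊ : ℝ)) * (a k)⁻¹) • w) atTop
            (𝓝 (0 : Ed d)) := by
          have := harg0.smul_const w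
          rw [zero_smul] at this
          exact this
        have hcomp := ((hS_cont n).tendsto 0).comp harg
        rw [hS_zero n] at hcomp
        have h11 := (Real.continuous_sqrt.tendsto 0).comp hcomp
        rw [Real.sqrt_zero] at h11
        have h12 := h11.const_mul (Real.sqrt (p n))
        rw [mul_zero] at h12
        exact h12
      have hsum := hterm1.add hterm2
      rw [add_zero] at hsum
      have hle0 : Real.sqrt (p n * S n ((a n)⁻¹ • w)) ≤ 0 :=
        ge_of_tendsto hsum (Filter.eventually_atTop.mpr ⟨n, hkey⟩)
      have hEnn : 0 ≤ p n * S n ((a n)⁻¹ • w) := mul_nonneg (hp_pos n).le (hS_nonneg _ _)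
      have hsq0 : Real.sqrt (p n * S n ((a n)⁻¹ • w)) = 0 :=
        le_antisymm hle0 (Real.sqrt_nonneg _)
      have := Real.sqrt_eq_zero'.mp hsq0
      linarith
    have hconst : Tendsto (fun n => Real.exp (-(p n * S n ((a n)⁻¹ • w)))) atTop (𝓝 1) := by
      apply Tendsto.congr (f₁ := fun _ : ℕ => (1:ℝ))
      · intro n
        rw [hEzero n]
        simp
      · exact tendsto_const_nhds
    exact (tendsto_nhds_unique hconst (step1 w)).symm ▸ rfl
  -- Step 4 : the modulus never vanishes
  have hdouble : ∀ v : Ed d, ‖charFn μ v‖ = 0 → ‖charFn μ ((2:ℝ)⁻¹ • v)‖ = 0 := by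
    intro v hv
    have hineq : ∀ n : ℕ, (Real.exp (-(p n * S n ((a n)⁻¹ • ((2:ℝ)⁻¹ • v))))) ^ (4:ℕ)
        ≤ Real.exp (-(p n * S n ((a n)⁻¹ • v))) := by
      intro n
      set u : Ed d := (a n)⁻¹ • ((2:ℝ)⁻¹ • v) with hu
      have hdec : (a n)⁻¹ • v = u + u := by
        rw [hu, ← two_smul ℝ, smul_smul, smul_smul]
        congr 1
        ring
      have h1 : S n ((a n)⁻¹ • v) ≤ 4 * S n u := by
        have h2 := hS_sub n u u
        have h3 : S n (u + u) ≤ (Real.sqrt (S n u) + Real.sqrt (S n u)) ^ 2 := by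
          have h4 : S n (u + u) = Real.sqrt (S n (u + u)) ^ 2 :=
            (Real.sq_sqrt (hS_nonneg n _)).symm
          rw [h4]
          exact pow_le_pow_left₀ (Real.sqrt_nonneg _) h2 2
        rw [hdec]
        calc S n (u + u) ≤ (Real.sqrt (S n u) + Real.sqrt (S n u)) ^ 2 := h3
          _ = 4 * (Real.sqrt (S n u) ^ 2) := by ring
          _ = 4 * S n u := by rw [Real.sq_sqrt (hS_nonneg n u)]
      rw [← Real.exp_nat_mul]
      apply Real.exp_le_exp.mpr
      push_cast
      nlinarith [hp_pos n, (hp_pos n).le, hS_nonneg n u]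
    have hlim : ‖charFn μ ((2:ℝ)⁻¹ • v)‖ ^ (4:ℕ) ≤ ‖charFn μ v‖ :=
      le_of_tendsto_of_tendsto' ((step1 ((2:ℝ)⁻¹ • v)).pow 4) (step1 v) hineq
    rw [hv] at hlim
    have h0 : (0:ℝ) ≤ ‖charFn μ ((2:ℝ)⁻¹ • v)‖ := norm_nonneg _
    have h1 : ‖charFn μ ((2:ℝ)⁻¹ • v)‖ ^ (4:ℕ) = 0 :=
      le_antisymm hlim (pow_nonneg h0 4)
    exact pow_eq_zero_iff (by norm_num) |>.mp h1
  intro z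
  by_cases hz : ‖charFn μ z‖ = 0
  · exfalso
    have hiter : ∀ k : ℕ, ‖charFn μ (((2:ℝ)⁻¹) ^ k • z)‖ = 0 := by
      intro k
      induction k with
      | zero => simpa using hz
      | succ k ih =>
          have heq : ((2:ℝ)⁻¹) ^ (k+1) • z = (2:ℝ)⁻¹ • (((2:ℝ)⁻¹) ^ k • z) := by
            rw [smul_smul, pow_succ, mul_comm]
          rw [heq]
          exact hdouble _ ih
    haveI := hprob
    have hcont : Tendsto (fun k : ℕ => charFn μ (((2:ℝ)⁻¹) ^ k • z)) atTop
        (𝓝 (charFn μ 0)) := by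
      show Tendsto (fun k : ℕ => ∫ x, Complex.exp ((⟪((2:ℝ)⁻¹) ^ k • z, x⟫_ℝ : ℂ) * Complex.I) ∂μ)
        atTop (𝓝 (∫ x, Complex.exp ((⟪(0 : Ed d), x⟫_ℝ : ℂ) * Complex.I) ∂μ))
      apply tendsto_integral_of_dominated_convergence (bound := fun _ => 1)
      · exact fun k => (cont_kern _).aestronglyMeasurable
      · exact integrable_const 1
      · intro k
        exact Filter.Eventually.of_forall fun x => le_of_eq (norm_kern _)
      · refine Filter.Eventually.of_forall fun x => ?_
        have h1 : Tendsto (fun k : ℕ => ((2:ℝ)⁻¹) ^ k * ⟪z, x⟫_ℝ) atTop (𝓝 0) := by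
          have h2 : Tendsto (fun k : ℕ => ((2:ℝ)⁻¹) ^ k) atTop (𝓝 0) := by
            apply tendsto_pow_atTop_nhds_zero_of_lt_one <;> norm_num
          have := h2.mul_const (⟪z, x⟫_ℝ)
          rw [zero_mul] at this
          exact this
        have hcf : Continuous fun r : ℝ => Complex.exp ((r : ℂ) * Complex.I) :=
          Complex.continuous_exp.comp (Complex.continuous_ofReal.mul continuous_const)
        have h3 := (hcf.tendsto 0).comp h1
        have h4 : ∀ k : ℕ, Complex.exp ((((2:ℝ)⁻¹ ^ k * ⟪z, x⟫_ℝ : ℝ) : ℂ) * Complex.I)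
            = Complex.exp ((⟪((2:ℝ)⁻¹) ^ k • z, x⟫_ℝ : ℂ) * Complex.I) := by
          intro k
          rw [real_inner_smul_left]
        have h5 := Tendsto.congr h4 h3
        have h6 : Complex.exp (((0:ℝ) : ℂ) * Complex.I)
            = Complex.exp ((⟪(0 : Ed d), x⟫_ℝ : ℂ) * Complex.I) := by
          rw [inner_zero_left]
        rw [h6] at h5
        exact h5
    have hnorm := hcont.norm
    rw [charFn_zero μ hprob] at hnorm
    have hzero_t : Tendsto (fun k : ℕ => ‖charFn μ (((2:ℝ)⁻¹) ^ k • z)‖) atTop (𝓝 0) :=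
      Tendsto.congr (fun k => (hiter k).symm) tendsto_const_nhds
    have h01 : (0:ℝ) = ‖(1:ℂ)‖ := tendsto_nhds_unique hzero_t hnorm
    simp at h01
  · exact step3 z hz

end Stmt3Aux
namespace Stmt3Aux

open MeasureTheory Filter Complex
open scoped InnerProductSpace Topology BigOperators

variable {d : ℕ}

lemma eq_dirac_of_norm_charFn (μ : Measure (Ed d)) (hp : IsProbabilityMeasure μ)
    (h : ∀ z : Ed d, ‖charFn μ z‖ = 1) : ∃ γ : Ed d, μ = Measure.dirac γ := by
  haveI := hp
  -- for every z, cos ⟪z, x - y⟫ = 1 a.e. on μ × μ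
  have key : ∀ z : Ed d, ∀ᵐ q ∂(μ.prod μ), Real.cos ⟪z, q.1 - q.2⟫_ℝ = 1 := by
    intro z
    have hneg : charFn μ (-z) = (starRingEnd ℂ) (charFn μ z) := by
      simp only [charFn]
      rw [← integral_conj]
      congr 1
      funext x
      rw [← Complex.exp_conj]
      congr 1
      simp only [map_mul, Complex.conj_ofReal, Complex.conj_I, inner_neg_left]
      push_cast
      ring
    have hint1 : ∫ q, Complex.exp ((⟪z, q.1 - q.2⟫_ℝ : ℂ) * Complex.I) ∂(μ.prod μ)
        = (1 : ℂ) := by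
      have hpt : ∀ q : Ed d × Ed d, Complex.exp ((⟪z, q.1 - q.2⟫_ℝ : ℂ) * Complex.I)
          = (fun x => Complex.exp ((⟪z, x⟫_ℝ : ℂ) * Complex.I)) q.1
            * (fun y => Complex.exp ((⟪-z, y⟫_ℝ : ℂ) * Complex.I)) q.2 := by
        intro q
        simp only
        rw [← Complex.exp_add, inner_sub_right, inner_neg_left]
        push_cast
        ring_nf
      simp_rw [hpt]
      have h12 : ∫ q : Ed d × Ed d, Complex.exp ((⟪z, q.1⟫_ℝ : ℂ) * Complex.I)
          * Complex.exp ((⟪-z, q.2⟫_ℝ : ℂ) * Complex.I) ∂(μ.prod μ)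
          = charFn μ z * charFn μ (-z) :=
        integral_prod_mul (fun x : Ed d => Complex.exp ((⟪z, x⟫_ℝ : ℂ) * Complex.I))
          (fun y : Ed d => Complex.exp ((⟪-z, y⟫_ℝ : ℂ) * Complex.I))
      rw [h12, hneg, Complex.mul_conj]
      have : Complex.normSq (charFn μ z) = 1 := by
        rw [Complex.normSq_eq_norm_sq, h z]
        norm_num
      rw [this]
      norm_cast
    have hcos : ∫ q, Real.cos ⟪z, q.1 - q.2⟫_ℝ ∂(μ.prod μ) = 1 := by
      have hi : Integrable (fun q : Ed d × Ed d =>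
          Complex.exp ((⟪z, q.1 - q.2⟫_ℝ : ℂ) * Complex.I)) (μ.prod μ) := by
        have hc : Continuous fun q : Ed d × Ed d =>
            Complex.exp ((⟪z, q.1 - q.2⟫_ℝ : ℂ) * Complex.I) :=
          Complex.continuous_exp.comp ((Complex.continuous_ofReal.comp
            (continuous_const.inner (continuous_fst.sub continuous_snd))).mul continuous_const)
        refine Integrable.mono' (integrable_const 1) hc.aestronglyMeasurable ?_
        exact Filter.Eventually.of_forall fun q => le_of_eq (norm_kern _)
      have h1 := integral_re (μ := μ.prod μ)
        (f := fun q : Ed d × Ed d => Complex.exp ((⟪z, q.1 - q.2⟫_ℝ : ℂ) * Complex.I)) hi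
      simp only [RCLike.re_to_complex] at h1
      have h2 : ∀ q : Ed d × Ed d,
          (Complex.exp ((⟪z, q.1 - q.2⟫_ℝ : ℂ) * Complex.I)).re
            = Real.cos ⟪z, q.1 - q.2⟫_ℝ := fun q => Complex.exp_ofReal_mul_I_re _
      rw [show (fun q : Ed d × Ed d => (Complex.exp ((⟪z, q.1 - q.2⟫_ℝ : ℂ) * Complex.I)).re)
        = fun q : Ed d × Ed d => Real.cos ⟪z, q.1 - q.2⟫_ℝ from funext h2] at h1
      rw [h1, hint1]
      norm_num
    have hnn : 0 ≤ fun q : Ed d × Ed d => 1 - Real.cos ⟪z, q.1 - q.2⟫_ℝ := by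
      intro q
      simp only [Pi.zero_apply]
      have := Real.cos_le_one ⟪z, q.1 - q.2⟫_ℝ
      linarith
    have hic : Integrable (fun q : Ed d × Ed d => 1 - Real.cos ⟪z, q.1 - q.2⟫_ℝ) (μ.prod μ) := by
      have hc : Continuous fun q : Ed d × Ed d => 1 - Real.cos ⟪z, q.1 - q.2⟫_ℝ :=
        continuous_const.sub (Real.continuous_cos.comp
          (continuous_const.inner (continuous_fst.sub continuous_snd)))
      refine Integrable.mono' (integrable_const 2) hc.aestronglyMeasurable ?_
      refine Filter.Eventually.of_forall fun q => ?_
      rw [Real.norm_eq_abs, abs_le]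
      constructor
      · have := Real.cos_le_one ⟪z, q.1 - q.2⟫_ℝ; linarith
      · have := Real.neg_one_le_cos ⟪z, q.1 - q.2⟫_ℝ; linarith
    have hzero : ∫ q, (1 - Real.cos ⟪z, q.1 - q.2⟫_ℝ) ∂(μ.prod μ) = 0 := by
      have hicos : Integrable (fun q : Ed d × Ed d => Real.cos ⟪z, q.1 - q.2⟫_ℝ) (μ.prod μ) := by
        have hc : Continuous fun q : Ed d × Ed d => Real.cos ⟪z, q.1 - q.2⟫_ℝ :=
          Real.continuous_cos.comp (continuous_const.inner (continuous_fst.sub continuous_snd))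
        refine Integrable.mono' (integrable_const 1) hc.aestronglyMeasurable ?_
        exact Filter.Eventually.of_forall fun q => by
          rw [Real.norm_eq_abs]; exact Real.abs_cos_le_one _
      rw [integral_sub (integrable_const 1) hicos, hcos, integral_const]
      simp
    have := (integral_eq_zero_iff_of_nonneg hnn hic).mp hzero
    filter_upwards [this] with q hq
    have : (1:ℝ) - Real.cos ⟪z, q.1 - q.2⟫_ℝ = 0 := hq
    linarith
  -- combine finitely many z to get q.1 = q.2 a.e.
  have hdiag : ∀ᵐ q ∂(μ.prod μ), q.1 = q.2 := by
    have h1 : ∀ᵐ q ∂(μ.prod μ), ∀ i : Fin d,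
        Real.cos ⟪EuclideanSpace.single i (1:ℝ), q.1 - q.2⟫_ℝ = 1 :=
      ae_all_iff.mpr fun i => key _
    have h2 : ∀ᵐ q ∂(μ.prod μ), ∀ i : Fin d,
        Real.cos ⟪(Real.pi)⁻¹ • EuclideanSpace.single i (1:ℝ), q.1 - q.2⟫_ℝ = 1 :=
      ae_all_iff.mpr fun i => key _
    filter_upwards [h1, h2] with q hq1 hq2
    have hco : ∀ i : Fin d, (q.1 - q.2) i = 0 := by
      intro i
      have e1 : ⟪EuclideanSpace.single i (1:ℝ), q.1 - q.2⟫_ℝ = (q.1 - q.2) i := by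
        rw [EuclideanSpace.inner_single_left]
        simp
      have e2 : ⟪(Real.pi)⁻¹ • EuclideanSpace.single i (1:ℝ), q.1 - q.2⟫_ℝ
          = (Real.pi)⁻¹ * (q.1 - q.2) i := by
        rw [real_inner_smul_left, e1]
      have c1 := hq1 i
      rw [e1] at c1
      have c2 := hq2 i
      rw [e2] at c2
      obtain ⟨nn, hnn⟩ := (Real.cos_eq_one_iff _).mp c1
      obtain ⟨mm, hmm⟩ := (Real.cos_eq_one_iff _).mp c2
      -- (q.1-q.2) i = nn * 2π  and  π⁻¹ * (q.1-q.2) i = mm * 2π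
      by_cases hm : mm = 0
      · subst hm
        have h0 : (Real.pi)⁻¹ * (q.1 - q.2) i = 0 := by
          rw [← hmm]; simp
        exact (mul_eq_zero.mp h0).resolve_left (inv_ne_zero Real.pi_ne_zero)
      · exfalso
        have hv : (q.1 - q.2) i = Real.pi * ((mm : ℝ) * (2 * Real.pi)) := by
          have hπ := Real.pi_ne_zero
          rw [hmm]
          field_simp
        rw [← hnn] at hv
        have h2π : (2:ℝ) * Real.pi ≠ 0 := by
          have := Real.pi_ne_zero
          positivity
        have hcan : (nn : ℝ) * (2 * Real.pi) = (Real.pi * (mm : ℝ)) * (2 * Real.pi) := by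
          rw [hv]; ring
        have hnpi : (nn : ℝ) = Real.pi * (mm : ℝ) := mul_right_cancel₀ h2π hcan
        have hmm0 : (mm : ℝ) ≠ 0 := Int.cast_ne_zero.mpr hm
        have hpi : Real.pi = (nn : ℝ) / (mm : ℝ) := by
          rw [hnpi]
          field_simp
        have hirr : Irrational Real.pi := irrational_pi
        rw [hpi] at hirr
        apply hirr
        refine ⟨(nn : ℚ) / (mm : ℚ), ?_⟩
        push_cast
        ring
    have : q.1 - q.2 = 0 := by
      ext i
      exact hco i
    exact sub_eq_zero.mp this
  -- extract the atom
  have hmeas : MeasurableSet {q : Ed d × Ed d | q.1 = q.2} :=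
    measurableSet_eq_fun measurable_fst measurable_snd
  have hnull : (μ.prod μ) {q : Ed d × Ed d | ¬ q.1 = q.2} = 0 := by
    have := hdiag
    rwa [MeasureTheory.ae_iff] at this
  have hcompl : {q : Ed d × Ed d | ¬ q.1 = q.2} = {q : Ed d × Ed d | q.1 = q.2}ᶜ := rfl
  rw [hcompl, Measure.prod_apply hmeas.compl] at hnull
  have hmeasf : Measurable fun x : Ed d => μ (Prod.mk x ⁻¹' {q : Ed d × Ed d | q.1 = q.2}ᶜ) :=
    measurable_measure_prodMk_left hmeas.compl
  have hae := (lintegral_eq_zero_iff hmeasf).mp hnull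
  haveI : (ae μ).NeBot := ae_neBot.mpr (IsProbabilityMeasure.ne_zero μ)
  obtain ⟨γ, hγ0⟩ := hae.exists
  have hγ : μ (Prod.mk γ ⁻¹' {q : Ed d × Ed d | q.1 = q.2}ᶜ) = 0 := by simpa using hγ0
  have hset : Prod.mk γ ⁻¹' {q : Ed d × Ed d | q.1 = q.2}ᶜ = {γ}ᶜ := by
    ext y
    simp [eq_comm]
  rw [hset] at hγ
  refine ⟨γ, Measure.ext fun s hs => ?_⟩
  rw [Measure.dirac_apply' _ hs]
  by_cases hγs : γ ∈ s
  · have hsub : sᶜ ⊆ {γ}ᶜ := by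
      intro y hy
      simp only [Set.mem_compl_iff, Set.mem_singleton_iff]
      intro h
      exact hy (h ▸ hγs)
    have hsc : μ sᶜ = 0 := measure_mono_null hsub hγ
    rw [(prob_compl_eq_zero_iff hs).mp hsc, Set.indicator_of_mem hγs]
    rfl
  · have hsub : s ⊆ {γ}ᶜ := by
      intro y hy
      simp only [Set.mem_compl_iff, Set.mem_singleton_iff]
      intro h
      exact hγs (h ▸ hy)
    rw [measure_mono_null hsub hγ, Set.indicator_of_notMem hγs]

end Stmt3Aux
namespace Stmt3Aux

open MeasureTheory Filter Complex
open scoped InnerProductSpace Topology BigOperators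

variable {d : ℕ}

lemma charFn_dirac_zero (z : Ed d) : charFn (Measure.dirac (0 : Ed d)) z = 1 := by
  rw [charFn_dirac]
  simp

lemma convPow_dirac_zero (n : ℕ) :
    convPow (Measure.dirac (0 : Ed d)) n = Measure.dirac (0 : Ed d) := by
  induction n with
  | zero => rfl
  | succ n ih =>
      show (convPow (Measure.dirac 0) n).conv (Measure.dirac 0) = Measure.dirac 0
      rw [ih]
      exact MeasureTheory.Measure.conv_dirac_zero _

lemma dirac_zero_mem_IDiv : Measure.dirac (0 : Ed d) ∈ IDiv d :=
  ⟨Measure.dirac.isProbabilityMeasure, fun n _ => ⟨Measure.dirac 0,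
    Measure.dirac.isProbabilityMeasure, convPow_dirac_zero n⟩⟩

lemma cumulant_eq_zero_of_charFn_one (μ : Measure (Ed d)) (hone : ∀ z, charFn μ z = 1) :
    ∀ z, cumulant μ z = 0 := by
  intro z
  rcases cumulant_cases μ with hspec | h0
  swap
  · rw [h0]; rfl
  obtain ⟨hcont, hzero, hch⟩ := hspec
  set C := cumulant μ with hC
  have hexp1 : ∀ w, Complex.exp (C w) = 1 := fun w => by rw [← hch w, hone w]
  have hint : ∀ w : Ed d, ∃ k : ℤ, C w = k * (2 * Real.pi * Complex.I) :=
    fun w => Complex.exp_eq_one_iff.mp (hexp1 w)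
  -- the function t ↦ (C (t • z)).im / (2π) is continuous, integer-valued, 0 at 0
  set g : ℝ → ℝ := fun t => (C (t • z)).im with hg
  have hgcont : Continuous g := by
    apply Complex.continuous_im.comp
    apply hcont.comp
    exact continuous_id.smul continuous_const
  have hgint : ∀ t, ∃ k : ℤ, g t = (k : ℝ) * (2 * Real.pi) := by
    intro t
    obtain ⟨k, hk⟩ := hint (t • z)
    refine ⟨k, ?_⟩
    rw [hg]
    simp only
    rw [hk]
    simp [Complex.mul_im]
  have hg0 : g 0 = 0 := by
    rw [hg]
    simp only [zero_smul, hzero]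
    rfl
  have hg1 : g 1 = 0 := by
    by_contra hne
    obtain ⟨k1, hk1⟩ := hgint 1
    have hπ : (0:ℝ) < Real.pi := Real.pi_pos
    have hk1ne : k1 ≠ 0 := by
      intro h0
      rw [h0] at hk1
      simp at hk1
      exact hne hk1
    rcases lt_or_gt_of_ne hk1ne with hneg | hpos
    · -- g 1 = k1 * 2π ≤ -2π < -π < 0 = g 0; find t with g t = -π
      have hmem : -Real.pi ∈ Set.Icc (g 1) (g 0) := by
        constructor
        · rw [hk1]
          have hk1le : k1 ≤ -1 := by omega
          have : (k1 : ℝ) ≤ -1 := by exact_mod_cast hk1le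
          nlinarith
        · rw [hg0]; linarith
      obtain ⟨t, -, ht⟩ := intermediate_value_Icc' (by norm_num : (0:ℝ) ≤ 1)
        (hgcont.continuousOn) hmem
      obtain ⟨k, hk⟩ := hgint t
      rw [ht] at hk
      -- -π = k * 2π
      have : (2 * (k:ℝ) + 1) * Real.pi = 0 := by linarith
      have h2k : (2 * (k:ℝ) + 1) = 0 := by
        rcases mul_eq_zero.mp this with h | h
        · exact h
        · exact absurd h (ne_of_gt hπ)
      have : (2 * k + 1 : ℤ) = 0 := by exact_mod_cast h2k
      omega
    · have hmem : Real.pi ∈ Set.Icc (g 0) (g 1) := by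
        constructor
        · rw [hg0]; linarith
        · rw [hk1]
          have : (1:ℝ) ≤ (k1 : ℝ) := by exact_mod_cast hpos
          nlinarith
      obtain ⟨t, -, ht⟩ := intermediate_value_Icc (by norm_num : (0:ℝ) ≤ 1)
        (hgcont.continuousOn) hmem
      obtain ⟨k, hk⟩ := hgint t
      rw [ht] at hk
      have : (2 * (k:ℝ) - 1) * Real.pi = 0 := by linarith
      have h2k : (2 * (k:ℝ) - 1) = 0 := by
        rcases mul_eq_zero.mp this with h | h
        · exact h
        · exact absurd h (ne_of_gt hπ)
      have : (2 * k - 1 : ℤ) = 0 := by exact_mod_cast h2k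
      omega
  -- conclude C z = 0
  obtain ⟨k, hk⟩ := hint ((1:ℝ) • z)
  have him : (C ((1:ℝ) • z)).im = (k : ℝ) * (2 * Real.pi) := by
    rw [hk]
    simp [Complex.mul_im]
  have hgz : (C ((1:ℝ) • z)).im = 0 := by
    rw [show (C ((1:ℝ) • z)).im = g 1 from rfl, hg1]
  rw [him] at hgz
  have hk0 : k = 0 := by
    have hπ : (0:ℝ) < Real.pi := Real.pi_pos
    rcases mul_eq_zero.mp hgz with h | h
    · exact_mod_cast h
    · exfalso; nlinarith
  subst hk0
  have : C ((1:ℝ) • z) = 0 := by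
    rw [hk]
    simp
  rwa [one_smul] at this

lemma dirac_zero_mem_H (H : Set (Measure (Ed d))) (hne : H.Nonempty) (hHI : H ⊆ IDiv d)
    (hH : IsCCSS H) : Measure.dirac (0 : Ed d) ∈ H := by
  obtain ⟨μ0, hμ0⟩ := hne
  haveI : IsProbabilityMeasure μ0 := (hHI hμ0).1
  have hmem : ∀ k : ℕ, μ0.map (fun x => ((k:ℝ) + 1)⁻¹ • x + 0) ∈ H := fun k =>
    hH.2.2.1 μ0 hμ0 _ (by positivity) 0
  apply hH.2.1 _ _ hmem Measure.dirac.isProbabilityMeasure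
  intro f
  have hmap : ∀ k : ℕ, ∫ x, f x ∂(μ0.map (fun x => ((k:ℝ) + 1)⁻¹ • x + 0))
      = ∫ x, f (((k:ℝ) + 1)⁻¹ • x + 0) ∂μ0 := by
    intro k
    apply integral_map
    · exact ((continuous_id.const_smul (((k:ℝ) + 1)⁻¹)).add continuous_const).measurable.aemeasurable
    · exact f.continuous.aestronglyMeasurable
  have hd : ∫ x, f x ∂(Measure.dirac (0 : Ed d)) = f 0 :=
    integral_dirac' _ _ f.continuous.stronglyMeasurable
  have hdc : Tendsto (fun k : ℕ => ∫ x, f (((k:ℝ) + 1)⁻¹ • x + 0) ∂μ0) atTop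
      (𝓝 (∫ _x, f 0 ∂μ0)) := by
    apply tendsto_integral_of_dominated_convergence (bound := fun _ => ‖f‖)
    · intro k
      exact (f.continuous.comp
        ((continuous_id.const_smul (((k:ℝ) + 1)⁻¹)).add continuous_const)).aestronglyMeasurable
    · exact integrable_const _
    · intro k
      exact Filter.Eventually.of_forall fun x => f.norm_coe_le_norm _
    · refine Filter.Eventually.of_forall fun x => ?_
      have h1 : Tendsto (fun k : ℕ => ((k:ℝ) + 1)⁻¹ • x + 0) atTop (𝓝 (0 : Ed d)) := by
        have h2 : Tendsto (fun k : ℕ => ((k:ℝ) + 1)⁻¹) atTop (𝓝 0) := by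
          have := tendsto_one_div_add_atTop_nhds_zero_nat (𝕜 := ℝ)
          simpa [one_div] using this
        have h3 := h2.smul_const x
        rw [zero_smul] at h3
        have h4 := h3.add_const (0 : Ed d)
        rwa [zero_add] at h4
      exact (f.continuous.tendsto 0).comp h1
  rw [integral_const, probReal_univ, one_smul] at hdc
  rw [hd]
  exact Tendsto.congr (fun k => (hmap k).symm) hdc

end Stmt3Aux
/-- for α > 2 and nonempty c.c.s.s. H, 𝔔_α(H) is the class of Dirac measures. -/
theorem stmt_3 (d : ℕ) (hd : 1 ≤ d) (α : ℝ) (hα : 2 < α)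
    (H : Set (Measure (Ed d))) (hne : H.Nonempty) (hHI : H ⊆ IDiv d) (hH : IsCCSS H) :
    QOp α H = {μ : Measure (Ed d) | ∃ γ : Ed d, μ = Measure.dirac γ} := by
  ext μ
  simp only [Set.mem_setOf_eq]
  constructor
  · intro hμ
    exact Stmt3Aux.eq_dirac_of_norm_charFn μ hμ.1 (Stmt3Aux.forall_norm_charFn_eq_one hα hμ)
  · rintro ⟨γ, rfl⟩
    haveI : IsProbabilityMeasure (Measure.dirac γ : Measure (Ed d)) :=
      Measure.dirac.isProbabilityMeasure
    refine ⟨inferInstance, fun _ => Measure.dirac 0, 0,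
      (fun n => (n : ℝ) + 1), (fun n => ((n : ℝ) + 1) ^ α), (fun _ => γ),
      fun _ => Stmt3Aux.dirac_zero_mem_IDiv,
      fun _ _ => Stmt3Aux.dirac_zero_mem_H H hne hHI hH,
      fun n => by positivity, ?_, ?_, ?_,
      fun n => Real.rpow_pos_of_pos (by positivity) α, ?_, ?_⟩
    · intro m n h
      simp only
      have : (m : ℝ) ≤ (n : ℝ) := Nat.cast_le.mpr h
      linarith
    · exact tendsto_atTop_add_const_right _ 1 tendsto_natCast_atTop_atTop
    · have heq : ∀ n : ℕ, (1 : ℝ) + 1 / ((n : ℝ) + 1)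
          = (((n + 1 : ℕ) : ℝ) + 1) / ((n : ℝ) + 1) := by
        intro n
        have h0 : (n : ℝ) + 1 ≠ 0 := by positivity
        push_cast
        field_simp
      have h1 : Filter.Tendsto (fun n : ℕ => (1 : ℝ) + 1 / ((n : ℝ) + 1)) Filter.atTop
          (nhds (1 + 0)) :=
        tendsto_const_nhds.add tendsto_one_div_add_atTop_nhds_zero_nat
      rw [add_zero] at h1
      exact Filter.Tendsto.congr heq h1
    · have heq : ∀ n : ℕ, (1 : ℝ) = ((n : ℝ) + 1) ^ α / ((n : ℝ) + 1) ^ α := fun n =>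
        (div_self (Real.rpow_pos_of_pos (by positivity) α).ne').symm
      exact Filter.Tendsto.congr heq tendsto_const_nhds
    · intro z
      have hcum : ∀ w : Ed d, cumulant (Measure.dirac (0 : Ed d)) w = 0 :=
        Stmt3Aux.cumulant_eq_zero_of_charFn_one _ Stmt3Aux.charFn_dirac_zero
      refine Filter.Tendsto.congr (fun n => ?_)
        (tendsto_const_nhds (x := charFn (Measure.dirac γ) z))
      have hone : ∀ j ∈ Finset.range n,
          Complex.exp (((((n : ℝ) + 1) ^ α : ℝ) : ℂ)
            * cumulant (Measure.dirac (0 : Ed d)) ((((n : ℝ) + 1))⁻¹ • z)) = 1 := by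
        intro j _
        rw [hcum]
        simp
      rw [Finset.prod_congr rfl hone, Finset.prod_const_one, one_mul,
        Stmt3Aux.charFn_dirac, real_inner_comm]
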